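/- Let H be the graph H_t (t ≥ 3) consisting of a cycle on vertices 0, 1, ..., 2t−1 together with extra vertices a, a', b, b' and edges (t+1)a, tb, ab, aa', bb'. Then every walk in H_t from a vertex in {0, 1} to a vertex in {t, t+1, a, b, a', b'} has at least t vertices. -/
import Mathlib


open SimpleGraph

/-- The graph `H_t`: a cycle on `ZMod (2t)` (vertices `0,…,2t−1`) together with
extra vertices `a = inr 0`, `a' = inr 1`, `b = inr 2`, `b' = inr 3` and edges
`(t+1)a`, `tb`, `ab`, `aa'`, `bb'`. -/
def Ht (t : ℕ) : SimpleGraph (ZMod (2 * t) ⊕ Fin 4) :=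
  SimpleGraph.fromRel (fun x y =>
    match x, y with
    | Sum.inl i, Sum.inl j => j = i + 1
    | Sum.inl i, Sum.inr j =>
        (i = ((t : ℕ) + 1 : ℕ) ∧ (j : ℕ) = 0) ∨ (i = (t : ℕ) ∧ (j : ℕ) = 2)
    | Sum.inr i, Sum.inr j =>
        ((i : ℕ) = 0 ∧ (j : ℕ) = 2) ∨ ((i : ℕ) = 0 ∧ (j : ℕ) = 1) ∨
          ((i : ℕ) = 2 ∧ (j : ℕ) = 3)
    | _, _ => False)

/-- A potential function: distance from the set `{0,1}` on the cycle part. -/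
def fpot (t : ℕ) : ZMod (2 * t) ⊕ Fin 4 → ℕ
  | Sum.inl i => min (i.val - 1) (2 * t - i.val)
  | Sum.inr j => if (j : ℕ) = 0 ∨ (j : ℕ) = 2 then t else t + 1

lemma fpot_lip (t : ℕ) (ht : 3 ≤ t) {x y : ZMod (2 * t) ⊕ Fin 4}
    (h : (Ht t).Adj x y) : fpot t y ≤ fpot t x + 1 := by
  haveI : NeZero (2 * t) := ⟨by omega⟩
  rw [Ht, fromRel_adj] at h
  obtain ⟨-, h⟩ := h
  haveI : Fact (1 < 2 * t) := ⟨by omega⟩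
  have hone : (1 : ZMod (2 * t)).val = 1 := ZMod.val_one _
  -- key fact about successor edges on the cycle
  have cyc : ∀ i : ZMod (2 * t),
      (i + 1).val = i.val + 1 ∨ (i.val = 2 * t - 1 ∧ (i + 1).val = 0) := by
    intro i
    have hi : i.val < 2 * t := ZMod.val_lt i
    have := ZMod.val_add i 1
    rw [hone] at this
    rcases Nat.lt_or_ge (i.val + 1) (2 * t) with hlt | hge
    · left; rw [this, Nat.mod_eq_of_lt hlt]
    · right
      have h2 : i.val + 1 = 2 * t := by omega
      constructor
      · omega
      · rw [this, h2, Nat.mod_self]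
  have ht1 : (((t : ℕ) + 1 : ℕ) : ZMod (2 * t)).val = t + 1 :=
    ZMod.val_natCast_of_lt (by omega)
  have ht0 : (((t : ℕ)) : ZMod (2 * t)).val = t :=
    ZMod.val_natCast_of_lt (by omega)
  rcases x with i | i <;> rcases y with j | j <;> simp only [Ht] at h
  · -- inl inl
    rcases h with h | h
    · subst h
      rcases cyc i with hc | ⟨hc1, hc2⟩
      · simp only [fpot, hc]; omega
      · simp only [fpot, hc2]; omega
    · subst h
      have hj : j.val < 2 * t := ZMod.val_lt j
      rcases cyc j with hc | ⟨hc1, hc2⟩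
      · simp only [fpot, hc]; omega
      · simp only [fpot, hc1, hc2]; omega
  · -- inl inr
    rcases h with (⟨hi, hj⟩ | ⟨hi, hj⟩) | h
    · subst hi; simp only [fpot, ht1, hj]; norm_num <;> omega
    · subst hi; simp only [fpot, ht0, hj]; norm_num <;> omega
    · exact absurd h (by simp)
  · -- inr inl
    rcases h with h | (⟨hj, hi⟩ | ⟨hj, hi⟩)
    · exact absurd h (by simp)
    · subst hj; simp only [fpot, ht1, hi]; norm_num <;> omega
    · subst hj; simp only [fpot, ht0, hi]; norm_num <;> omega
  · -- inr inr
    rcases h with (⟨h1, h2⟩ | ⟨h1, h2⟩ | ⟨h1, h2⟩) | (⟨h1, h2⟩ | ⟨h1, h2⟩ | ⟨h1, h2⟩) <;>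
      simp only [fpot, h1, h2] <;> norm_num <;> omega

lemma fpot_walk (t : ℕ) (ht : 3 ≤ t) {u v : ZMod (2 * t) ⊕ Fin 4}
    (p : (Ht t).Walk u v) : fpot t v ≤ fpot t u + p.length := by
  induction p with
  | nil => simp
  | cons h p ih =>
      have := fpot_lip t ht h
      simp only [SimpleGraph.Walk.length_cons]
      omega

/-- Every walk in `H_t` from a vertex in `{0,1}` to a vertex in
`{t, t+1, a, b, a', b'}` has at least `t` vertices. -/
theorem stmt15 (t : ℕ) (ht : 3 ≤ t) (u v : ZMod (2 * t) ⊕ Fin 4)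
    (p : (Ht t).Walk u v)
    (hu : u ∈ ({Sum.inl 0, Sum.inl 1} : Set (ZMod (2 * t) ⊕ Fin 4)))
    (hv : v ∈ ({Sum.inl ((t : ℕ) : ZMod (2 * t)),
        Sum.inl (((t : ℕ) + 1 : ℕ) : ZMod (2 * t)),
        Sum.inr 0, Sum.inr 1, Sum.inr 2, Sum.inr 3} :
        Set (ZMod (2 * t) ⊕ Fin 4))) :
    t ≤ p.length + 1 := by
  haveI : NeZero (2 * t) := ⟨by omega⟩
  have key := fpot_walk t ht p
  have hu0 : fpot t u = 0 := by
    rcases hu with hu | hu <;> subst hu <;> simp only [fpot]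
    · rw [ZMod.val_zero]; omega
    · haveI : Fact (1 < 2 * t) := ⟨by omega⟩
      rw [ZMod.val_one]; omega
  have hv0 : t - 1 ≤ fpot t v := by
    have ht1 : (((t : ℕ) + 1 : ℕ) : ZMod (2 * t)).val = t + 1 :=
      ZMod.val_natCast_of_lt (by omega)
    have ht0 : (((t : ℕ)) : ZMod (2 * t)).val = t :=
      ZMod.val_natCast_of_lt (by omega)
    rcases hv with hv | hv | hv | hv | hv | hv <;> subst hv <;>
      simp only [fpot, ht0, ht1] <;>
      first | omega | (rw [if_pos (by decide)]; omega) | (rw [if_neg (by decide)]; omega)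
  omega
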